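/- Let m ≥ 1, let G be the free product of a free abelian group of rank m and an infinite cyclic group, and let H = G/G'', where G'' is the second derived subgroup of G. Then Σ¹(H) is empty, i.e., [μ] ∉ Σ¹(H) for every character μ of H. -/

import Mathlib

/-- A (real) character of a group: a nonzero homomorphism to `(ℝ, +)`. -/
def IsCharacter {G : Type*} [Group G] (χ : G → ℝ) : Prop :=
  (∀ g h : G, χ (g * h) = χ g + χ h) ∧ χ ≠ 0

/-- `χ` is `S`-connected: any two elements of `G_χ = {g | 0 ≤ χ g}` are joined by a
sequence inside `G_χ` whose consecutive members differ by right multiplication by an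
element of `S ∪ S⁻¹`. -/
def SConnectedChar {G : Type*} [Group G] (χ : G → ℝ) (S : Set G) : Prop :=
  ∀ a b : G, 0 ≤ χ a → 0 ≤ χ b →
    Relation.ReflTransGen
      (fun x y : G => 0 ≤ χ x ∧ 0 ≤ χ y ∧ ∃ s, (s ∈ S ∨ s⁻¹ ∈ S) ∧ y = x * s) a b

/-- `[χ] ∈ Σ¹(G)`: `χ` is `S`-connected for every finite generating set `S` of `G`. -/
def MemSigma1 {G : Type*} [Group G] (χ : G → ℝ) : Prop :=
  ∀ S : Finset G, Subgroup.closure (S : Set G) = ⊤ → SConnectedChar χ (S : Set G)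

instance derivedSeriesNormal {G : Type*} [Group G] (n : ℕ) : (derivedSeries G n).Normal :=
  derivedSeries_normal G n

/-- The free product `G` of a free abelian group of rank `m` and an infinite cyclic
group. -/
abbrev G16 (m : ℕ) : Type :=
  Monoid.Coprod (Multiplicative (FreeAbelianGroup (Fin m))) (Multiplicative ℤ)

/-- The maximal metabelian quotient `H = G/G''`. -/
abbrev H16 (m : ℕ) : Type := G16 m ⧸ derivedSeries (G16 m) 2

namespace Statement16Aux

open Monoid

/-- The abelianization lattice `ℤ^m × ℤ`. -/
abbrev Qa (m : ℕ) := FreeAbelianGroup (Fin m) × ℤ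

/-- A wreath-like metabelian group `ℤ^(Qa) ⋊ Qa` (with full function base). -/
@[ext] structure W (m : ℕ) where
  q : Qa m
  f : Qa m → ℤ

namespace W

variable {m : ℕ}

instance : Mul (W m) := ⟨fun x y => ⟨x.q + y.q, fun p => x.f p + y.f (p - x.q)⟩⟩
instance : One (W m) := ⟨⟨0, fun _ => 0⟩⟩
instance : Inv (W m) := ⟨fun x => ⟨-x.q, fun p => -x.f (p + x.q)⟩⟩

@[simp] lemma mul_q (x y : W m) : (x * y).q = x.q + y.q := rfl
@[simp] lemma mul_f (x y : W m) (p : Qa m) : (x * y).f p = x.f p + y.f (p - x.q) := rfl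
@[simp] lemma one_q : (1 : W m).q = 0 := rfl
@[simp] lemma one_f (p : Qa m) : (1 : W m).f p = 0 := rfl
@[simp] lemma inv_q (x : W m) : x⁻¹.q = -x.q := rfl
@[simp] lemma inv_f (x : W m) (p : Qa m) : x⁻¹.f p = -x.f (p + x.q) := rfl

lemma ext' {x y : W m} (h1 : x.q = y.q) (h2 : ∀ p, x.f p = y.f p) : x = y := by
  cases x; cases y
  simp only [W.mk.injEq]
  exact ⟨h1, funext h2⟩

instance : Group (W m) where
  mul_assoc a b c := ext' (add_assoc _ _ _) fun p => by
    simp only [mul_f, mul_q, sub_sub, add_assoc]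
  one_mul a := ext' (zero_add _) fun p => by simp
  mul_one a := ext' (add_zero _) fun p => by simp
  inv_mul_cancel a := ext' (neg_add_cancel _) fun p => by simp [sub_neg_eq_add]

/-- Projection onto the lattice part. -/
def qhom : W m →* Multiplicative (Qa m) where
  toFun x := Multiplicative.ofAdd x.q
  map_one' := rfl
  map_mul' _ _ := rfl

@[simp] lemma qhom_apply (x : W m) : (qhom x).toAdd = x.q := rfl

lemma q_zpow (x : W m) (k : ℤ) : (x ^ k).q = k • x.q := by
  have h := congrArg Multiplicative.toAdd (map_zpow (qhom (m := m)) x k)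
  rw [toAdd_zpow] at h
  exact h

/-- `f`-part of a commutator `x * y * x⁻¹ * y⁻¹` with `x` of trivial `f`-part. -/
lemma commutator_f2 (x y : W m) (hx : ∀ z, x.f z = 0) (p : Qa m) :
    (x * y * x⁻¹ * y⁻¹).f p = y.f (p - x.q) - y.f p := by
  have e : p - (x.q + y.q + -x.q) + y.q = p := by abel
  simp only [mul_f, mul_q, inv_f, inv_q, hx, e]
  ring

/-- `f`-part of a commutator `y * x * y⁻¹ * x⁻¹` with `x` of trivial `f`-part. -/
lemma commutator_f1 (y x : W m) (hx : ∀ z, x.f z = 0) (p : Qa m) :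
    (y * x * y⁻¹ * x⁻¹).f p = y.f p - y.f (p - x.q) := by
  have e : p - (y.q + x.q) + y.q = p - x.q := by abel
  simp only [mul_f, mul_q, inv_f, inv_q, hx, e]
  ring

end W

open W

variable {m : ℕ}

open scoped Classical in
/-- The image of the generator of the `ℤ` factor. -/
noncomputable def wT : W m := ⟨(0, 1), fun p => if p = 0 then 1 else 0⟩

@[simp] lemma wT_q : (wT (m := m)).q = (0, 1) := rfl

/-- The map from the free abelian factor. -/
def φA : Multiplicative (FreeAbelianGroup (Fin m)) →* W m where
  toFun x := ⟨(x.toAdd, 0), fun _ => 0⟩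
  map_one' := rfl
  map_mul' x y := ext' (by simp [Prod.ext_iff]) fun p => by simp

/-- The homomorphism `G → W`. -/
noncomputable def φ : G16 m →* W m :=
  Coprod.lift φA (zpowersHom (W m) wT)

lemma derived_two_W : derivedSeries (W m) 2 = ⊥ := by
  have h1 : derivedSeries (W m) 1 ≤ (qhom (m := m)).ker := by
    rw [show (1 : ℕ) = 0 + 1 from rfl, derivedSeries_succ, derivedSeries_zero,
      Subgroup.commutator_le]
    intro g _ h _
    rw [MonoidHom.mem_ker, map_commutatorElement, commutatorElement_eq_one_iff_mul_comm]
    exact mul_comm _ _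
  rw [eq_bot_iff, show (2 : ℕ) = 1 + 1 from rfl, derivedSeries_succ, Subgroup.commutator_le]
  intro g hg h hh
  have hgq : g.q = 0 := by
    have := h1 hg
    rw [MonoidHom.mem_ker] at this
    exact congrArg Multiplicative.toAdd this
  have hhq : h.q = 0 := by
    have := h1 hh
    rw [MonoidHom.mem_ker] at this
    exact congrArg Multiplicative.toAdd this
  rw [Subgroup.mem_bot, commutatorElement_eq_one_iff_mul_comm]
  exact ext' (by rw [mul_q, mul_q, add_comm]) fun p => by
    simp [hgq, hhq, add_comm]

lemma φ_derived (g : G16 m) (hg : g ∈ derivedSeries (G16 m) 2) : φ g = 1 := by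
  have : φ g ∈ derivedSeries (W m) 2 :=
    map_derivedSeries_le_derivedSeries φ 2 (Subgroup.mem_map_of_mem φ hg)
  rwa [derived_two_W, Subgroup.mem_bot] at this

/-- The induced homomorphism `H → W`. -/
noncomputable def ψ : H16 m →* W m :=
  QuotientGroup.lift (derivedSeries (G16 m) 2) φ φ_derived

@[simp] lemma ψ_mk (g : G16 m) : ψ (QuotientGroup.mk g) = φ g := rfl

/-- Generators of `H`. -/
def aH (i : Fin m) : H16 m :=
  QuotientGroup.mk (Coprod.inl (Multiplicative.ofAdd (FreeAbelianGroup.of i)))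

def tH (m : ℕ) : H16 m :=
  QuotientGroup.mk (Coprod.inr (Multiplicative.ofAdd (1 : ℤ)))

@[simp] lemma ψ_aH (i : Fin m) :
    ψ (aH i) = ⟨(FreeAbelianGroup.of i, 0), fun _ => 0⟩ := by
  simp only [aH, ψ_mk, φ, Coprod.lift_apply_inl]
  rfl

@[simp] lemma ψ_tH : ψ (tH m) = wT := by
  simp only [tH, ψ_mk, φ, Coprod.lift_apply_inr, zpowersHom_apply, toAdd_ofAdd,
    zpow_one]

lemma ψ_aH_f (i : Fin m) (z : Qa m) : (ψ (aH i)).f z = 0 := by rw [ψ_aH]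

lemma ψ_aH_q (i : Fin m) : (ψ (aH i)).q = (FreeAbelianGroup.of i, 0) := by rw [ψ_aH]

lemma ψ_aH_zpow_f (i : Fin m) (k : ℤ) (z : Qa m) : (ψ (aH i) ^ k).f z = 0 := by
  induction k using Int.induction_on generalizing z with
  | zero => simp
  | succ k ih => rw [zpow_add_one, mul_f, ih, ψ_aH_f]; ring
  | pred k ih =>
    rw [zpow_sub_one, mul_f, ih, inv_f, ψ_aH_f]
    ring

/-- The generating set. -/
noncomputable instance (m : ℕ) : DecidableEq (H16 m) := Classical.decEq _

noncomputable def S (m : ℕ) : Finset (H16 m) :=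
  insert (tH m) (Finset.image aH Finset.univ)

lemma closure_S : Subgroup.closure ((S m : Finset (H16 m)) : Set (H16 m)) = ⊤ := by
  rw [eq_top_iff]
  intro h htriv
  clear htriv
  obtain ⟨g, rfl⟩ := QuotientGroup.mk_surjective h
  induction g using Coprod.induction_on with
  | mul x y hx hy => rw [QuotientGroup.mk_mul]; exact mul_mem hx hy
  | inl a =>
    have key : ∀ x : FreeAbelianGroup (Fin m),
        (QuotientGroup.mk (Coprod.inl (Multiplicative.ofAdd x)) : H16 m) ∈
          Subgroup.closure ((S m : Finset (H16 m)) : Set (H16 m)) := by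
      intro x
      induction x using FreeAbelianGroup.induction_on with
      | zero =>
        have h0 : (Multiplicative.ofAdd (0 : FreeAbelianGroup (Fin m))) = 1 := rfl
        rw [h0, map_one, QuotientGroup.mk_one]
        exact (Subgroup.closure _).one_mem
      | of i =>
        exact Subgroup.subset_closure (Finset.mem_coe.mpr
          (Finset.mem_insert_of_mem (Finset.mem_image_of_mem aH (Finset.mem_univ i))))
      | neg i hi =>
        have h1 : (Multiplicative.ofAdd (-FreeAbelianGroup.of i)) =
            (Multiplicative.ofAdd (FreeAbelianGroup.of i))⁻¹ := rfl
        rw [h1, map_inv, QuotientGroup.mk_inv]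
        exact inv_mem hi
      | add x y hx hy =>
        have h1 : (Multiplicative.ofAdd (x + y)) =
            Multiplicative.ofAdd x * Multiplicative.ofAdd y := rfl
        rw [h1, map_mul, QuotientGroup.mk_mul]
        exact mul_mem hx hy
    exact key a.toAdd
  | inr b =>
    have hb : (Coprod.inr b : G16 m) =
        (Coprod.inr (Multiplicative.ofAdd (1 : ℤ))) ^ (b.toAdd) := by
      rw [← map_zpow]
      congr 1
      rw [← ofAdd_zsmul]
      simp
    rw [hb, QuotientGroup.mk_zpow]
    exact zpow_mem (Subgroup.subset_closure
      (Finset.mem_coe.mpr (Finset.mem_insert_self _ _))) _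

/-- The linear functional on `Qa` induced by `μ`. -/
noncomputable def ell (μ : H16 m → ℝ) : Qa m →+ ℝ :=
  (FreeAbelianGroup.lift fun i => μ (aH i)).coprod (zmultiplesHom ℝ (μ (tH m)))

@[simp] lemma ell_apply (μ : H16 m → ℝ) (x : FreeAbelianGroup (Fin m)) (k : ℤ) :
    ell μ (x, k) = FreeAbelianGroup.lift (fun i => μ (aH i)) x + k • μ (tH m) := rfl

section Character

variable (μ : H16 m → ℝ) (hadd : ∀ g h : H16 m, μ (g * h) = μ g + μ h)

include hadd

lemma mu_one : μ 1 = 0 := by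
  have := hadd 1 1
  rw [one_mul] at this
  linarith

lemma mu_inv (x : H16 m) : μ x⁻¹ = -μ x := by
  have := hadd x x⁻¹
  rw [mul_inv_cancel, mu_one μ hadd] at this
  linarith

lemma mu_zpow (x : H16 m) (k : ℤ) : μ (x ^ k) = k * μ x := by
  induction k using Int.induction_on with
  | zero => simpa using mu_one μ hadd
  | succ n ih =>
    rw [zpow_add_one, hadd, ih]
    push_cast
    ring
  | pred n ih =>
    rw [zpow_sub_one, hadd, ih, mu_inv μ hadd]
    push_cast
    ring

/-- The functional `ell μ` computes `μ` through `ψ`. -/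
lemma ell_comp (h : H16 m) : ell μ ((ψ h).q) = μ h := by
  obtain ⟨g, rfl⟩ := QuotientGroup.mk_surjective h
  induction g using Coprod.induction_on with
  | mul x y hx hy =>
    rw [QuotientGroup.mk_mul, map_mul, mul_q, map_add, hx, hy, hadd]
  | inl a =>
    obtain ⟨x, rfl⟩ : ∃ x, Multiplicative.ofAdd x = a := ⟨a.toAdd, rfl⟩
    induction x using FreeAbelianGroup.induction_on with
    | zero =>
      have h0 : (Multiplicative.ofAdd (0 : FreeAbelianGroup (Fin m))) = 1 := rfl
      rw [h0, map_one, QuotientGroup.mk_one, map_one, mu_one μ hadd, one_q, map_zero]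
    | of i =>
      rw [show (QuotientGroup.mk (Coprod.inl (Multiplicative.ofAdd (FreeAbelianGroup.of i))) :
          H16 m) = aH i from rfl]
      rw [ψ_aH_q]
      simp
    | neg i _ =>
      have h1 : (Multiplicative.ofAdd (-FreeAbelianGroup.of i)) =
          (Multiplicative.ofAdd (FreeAbelianGroup.of i))⁻¹ := rfl
      rw [h1, map_inv, QuotientGroup.mk_inv, map_inv, inv_q, map_neg, mu_inv μ hadd]
      rw [show (QuotientGroup.mk (Coprod.inl (Multiplicative.ofAdd (FreeAbelianGroup.of i))) :
          H16 m) = aH i from rfl]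
      rw [ψ_aH_q]
      simp
    | add x y hx hy =>
      have h1 : (Multiplicative.ofAdd (x + y)) =
          Multiplicative.ofAdd x * Multiplicative.ofAdd y := rfl
      rw [h1, map_mul, QuotientGroup.mk_mul, map_mul, mul_q, map_add, hx, hy, hadd]
  | inr b =>
    obtain ⟨k, rfl⟩ : ∃ k : ℤ, Multiplicative.ofAdd k = b := ⟨b.toAdd, rfl⟩
    have hb : (Coprod.inr (Multiplicative.ofAdd k) : G16 m) =
        (Coprod.inr (Multiplicative.ofAdd (1 : ℤ))) ^ k := by
      rw [← map_zpow]
      congr 1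
      rw [← ofAdd_zsmul]
      simp
    rw [hb, QuotientGroup.mk_zpow]
    rw [show (QuotientGroup.mk (Coprod.inr (Multiplicative.ofAdd (1 : ℤ))) : H16 m) = tH m
      from rfl]
    rw [map_zpow, mu_zpow μ hadd, ψ_tH, q_zpow]
    have h2 : (k • (wT (m := m)).q) = ((0 : FreeAbelianGroup (Fin m)), k) := by
      rw [wT_q, Prod.smul_mk]
      simp
    rw [h2]
    simp

end Character

end Statement16Aux

open Statement16Aux Statement16Aux.W Monoid

/-- For `G` the free product of a free abelian group of rank `m ≥ 1`
and an infinite cyclic group, and `H = G/G''`, the invariant `Σ¹(H)` is empty. -/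
theorem statement16 (m : ℕ) (hm : 1 ≤ m) (μ : H16 m → ℝ) (hμ : IsCharacter μ) :
    ¬ MemSigma1 μ := by
  intro hMem
  obtain ⟨hadd, hne⟩ := hμ
  have h1 : μ 1 = 0 := mu_one μ hadd
  have hinv : ∀ x : H16 m, μ x⁻¹ = -μ x := mu_inv μ hadd
  have hcomp : ∀ h : H16 m, ell μ ((ψ h).q) = μ h := ell_comp μ hadd
  -- the one-step invariance of deep coefficients
  have step : ∀ p : Qa m, ell μ p < -|μ (tH m)| → ∀ x y : H16 m,
      (0 ≤ μ x ∧ 0 ≤ μ y ∧ ∃ s, (s ∈ ((S m : Finset (H16 m)) : Set (H16 m)) ∨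
        s⁻¹ ∈ ((S m : Finset (H16 m)) : Set (H16 m))) ∧ y = x * s) →
      (ψ y).f p = (ψ x).f p := by
    rintro p hp x y ⟨hx, -, s, hs, rfl⟩
    rw [map_mul, mul_f]
    suffices h : (ψ s).f (p - (ψ x).q) = 0 by rw [h, add_zero]
    have hq : ell μ (p - (ψ x).q) < -|μ (tH m)| := by
      rw [map_sub, hcomp]
      linarith
    have habs0 : -|μ (tH m)| ≤ 0 := neg_nonpos.mpr (abs_nonneg _)
    have habsc : -|μ (tH m)| ≤ -μ (tH m) := neg_le_neg (le_abs_self _)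
    have hmemS : ∀ u : H16 m, u ∈ ((S m : Finset (H16 m)) : Set (H16 m)) →
        u = tH m ∨ ∃ i, u = aH i := by
      intro u hu
      simp only [S, Finset.coe_insert, Set.mem_insert_iff, Finset.coe_image,
        Set.mem_image, Finset.mem_coe] at hu
      rcases hu with hu | ⟨i, _, hi⟩
      · exact Or.inl hu
      · exact Or.inr ⟨i, hi.symm⟩
    rcases hs with hs | hs
    · rcases hmemS s hs with rfl | ⟨i, rfl⟩
      · rw [ψ_tH]
        simp only [wT]
        rw [if_neg]
        intro h0
        rw [h0, map_zero] at hq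
        linarith
      · exact ψ_aH_f i _
    · rcases hmemS s⁻¹ hs with hs' | ⟨i, hs'⟩
      · have hse : s = (tH m)⁻¹ := by rw [← hs', inv_inv]
        subst hse
        rw [map_inv, ψ_tH, inv_f]
        simp only [wT]
        rw [if_neg, neg_zero]
        intro h0
        have h00 : ell μ (p - (ψ x).q + ((0 : FreeAbelianGroup (Fin m)), (1 : ℤ))) = 0 := by
          rw [h0, map_zero]
        rw [map_add] at h00
        have h01 : ell μ ((0 : FreeAbelianGroup (Fin m)), (1 : ℤ)) = μ (tH m) := by simp
        rw [h01] at h00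
        linarith
      · have hse : s = (aH i)⁻¹ := by rw [← hs', inv_inv]
        subst hse
        rw [map_inv, inv_f, ψ_aH_f, neg_zero]
  -- deep coefficients vanish along positive paths from 1
  have path_inv : ∀ p : Qa m, ell μ p < -|μ (tH m)| → ∀ b : H16 m,
      Relation.ReflTransGen
        (fun x y : H16 m => 0 ≤ μ x ∧ 0 ≤ μ y ∧ ∃ s,
          (s ∈ ((S m : Finset (H16 m)) : Set (H16 m)) ∨
            s⁻¹ ∈ ((S m : Finset (H16 m)) : Set (H16 m))) ∧ y = x * s) 1 b →
      (ψ b).f p = 0 := by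
    intro p hp b hpath
    induction hpath with
    | refl => simp
    | tail _ hstep ih => rw [step p hp _ _ hstep, ih]
  -- it suffices to find a positive element with a deep nonzero coefficient
  have main : ∀ b : H16 m, ∀ p : Qa m, 0 ≤ μ b → ell μ p < -|μ (tH m)| →
      (ψ b).f p ≠ 0 → False := by
    intro b p hb hp hfb
    exact hfb (path_inv p hp b (hMem (S m) closure_S 1 b (le_of_eq h1.symm) hb))
  by_cases hA : ∃ i, μ (aH i) ≠ 0
  · -- Case A: some abelian generator has a nonzero character value
    obtain ⟨i, hi⟩ := hA
    obtain ⟨N, hN⟩ := exists_nat_gt (|μ (tH m)| / |μ (aH i)|)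
    have hlampos : 0 < |μ (aH i)| := abs_pos.mpr hi
    have hNlam : |μ (tH m)| < N * |μ (aH i)| := (div_lt_iff₀ hlampos).mp hN
    set n : ℤ := if 0 < μ (aH i) then -(N : ℤ) else (N : ℤ) with hn
    have hnlam : (n : ℝ) * μ (aH i) < -|μ (tH m)| := by
      rcases lt_or_ge 0 (μ (aH i)) with hl | hl
      · rw [hn, if_pos hl]
        push_cast
        rw [abs_of_pos hl] at hNlam
        nlinarith
      · rw [hn, if_neg (not_lt.mpr hl)]
        push_cast
        have hlneg : μ (aH i) < 0 := lt_of_le_of_ne hl hi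
        rw [abs_of_neg hlneg] at hNlam
        nlinarith
    have hψgq : (ψ (aH i ^ n)).q = ((n • FreeAbelianGroup.of i : FreeAbelianGroup (Fin m)),
        (0 : ℤ)) := by
      rw [map_zpow, q_zpow, ψ_aH_q, Prod.smul_mk]
      simp
    have hellp : ell μ ((n • FreeAbelianGroup.of i : FreeAbelianGroup (Fin m)), (0 : ℤ))
        = n * μ (aH i) := by
      rw [ell_apply, map_zsmul, FreeAbelianGroup.lift_apply_of]
      simp [zsmul_eq_mul]
    have hp : ell μ ((n • FreeAbelianGroup.of i : FreeAbelianGroup (Fin m)), (0 : ℤ))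
        < -|μ (tH m)| := by rw [hellp]; exact hnlam
    have hpne : ((n • FreeAbelianGroup.of i : FreeAbelianGroup (Fin m)), (0 : ℤ)) ≠
        (0 : Qa m) := by
      intro h0
      rw [h0, map_zero] at hp
      have : (0 : ℝ) ≤ |μ (tH m)| := abs_nonneg _
      linarith
    have hμb : μ (aH i ^ n * tH m * (aH i ^ n)⁻¹ * (tH m)⁻¹) = 0 := by
      rw [hadd, hadd, hadd, hinv, hinv]
      ring
    have hfb : (ψ (aH i ^ n * tH m * (aH i ^ n)⁻¹ * (tH m)⁻¹)).f
        ((n • FreeAbelianGroup.of i : FreeAbelianGroup (Fin m)), (0 : ℤ)) = 1 := by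
      simp only [map_mul, map_inv, ψ_tH]
      rw [commutator_f2 (ψ (aH i ^ n)) wT (fun z => by rw [map_zpow]; exact ψ_aH_zpow_f i n z)]
      rw [hψgq, sub_self]
      simp only [wT]
      simp [hpne]
    exact main _ _ (le_of_eq hμb.symm) hp (by rw [hfb]; norm_num)
  · -- Case B: all abelian generators vanish on μ, so μ (tH m) ≠ 0
    push_neg at hA
    have hc0 : μ (tH m) ≠ 0 := by
      intro h0
      apply hne
      funext h
      rw [← hcomp h]
      obtain ⟨x, k⟩ := (ψ h).q
      rw [ell_apply, h0]
      have hx0 : FreeAbelianGroup.lift (fun i => μ (aH i)) x = 0 := by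
        induction x using FreeAbelianGroup.induction_on with
        | zero => rw [map_zero]
        | of j => rw [FreeAbelianGroup.lift_apply_of]; exact hA j
        | neg j _ => rw [map_neg, FreeAbelianGroup.lift_apply_of, hA j, neg_zero]
        | add a b ha hb => rw [map_add, ha, hb, add_zero]
      rw [hx0]
      simp
    have hi0 : (0 : ℕ) < m := hm
    set i0 : Fin m := ⟨0, hi0⟩ with hi0def
    have hψa_f : ∀ z, (ψ (aH i0)).f z = 0 := ψ_aH_f i0
    have hμb : ∀ g : H16 m, μ (g * aH i0 * g⁻¹ * (aH i0)⁻¹) = 0 := by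
      intro g
      rw [hadd, hadd, hadd, hinv, hinv]
      ring
    -- `W3 = wT^3` computations
    have hW3f : ∀ z : Qa m, (wT * wT * wT).f z =
        (wT (m := m)).f z + (wT (m := m)).f (z - (0, 1)) + (wT (m := m)).f (z - (0, 2)) := by
      intro z
      rw [mul_f, mul_f, mul_q, wT_q]
      have h2 : ((0 : FreeAbelianGroup (Fin m)), (1 : ℤ)) + (0, 1) = (0, 2) := by
        rw [Prod.mk_add_mk]; norm_num
      rw [h2]
    have hW3q : (wT * wT * wT : W m).q = (0, 3) := by
      rw [mul_q, mul_q, wT_q, Prod.mk_add_mk, Prod.mk_add_mk]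
      norm_num
    have hofne : (FreeAbelianGroup.of i0 : FreeAbelianGroup (Fin m)) ≠ 0 :=
      FreeAbelianGroup.of_ne_zero i0
    rcases lt_trichotomy (μ (tH m)) 0 with hcneg | hczero | hcpos
    · -- c < 0 : use `b = t³ a t⁻³ a⁻¹` and the point `(0, 2)`
      set b : H16 m := (tH m * tH m * tH m) * aH i0 * (tH m * tH m * tH m)⁻¹ * (aH i0)⁻¹
        with hbdef
      have hellp : ell μ ((0 : FreeAbelianGroup (Fin m)), (2 : ℤ)) = 2 * μ (tH m) := by
        rw [ell_apply, map_zero, zero_add]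
        norm_num
      have hp : ell μ ((0 : FreeAbelianGroup (Fin m)), (2 : ℤ)) < -|μ (tH m)| := by
        rw [hellp, abs_of_neg hcneg]
        linarith
      have hfb : (ψ b).f ((0 : FreeAbelianGroup (Fin m)), (2 : ℤ)) = 1 := by
        rw [hbdef]
        simp only [map_mul, map_inv, ψ_tH]
        rw [commutator_f1 (wT * wT * wT) (ψ (aH i0)) hψa_f, ψ_aH_q]
        rw [hW3f, hW3f]
        simp only [wT]
        rw [Prod.mk_sub_mk, Prod.mk_sub_mk, Prod.mk_sub_mk]
        norm_num [Prod.ext_iff, hofne, sub_eq_zero]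
      exact main b _ (le_of_eq (hμb _).symm) hp (by rw [hfb]; norm_num)
    · exact hc0 hczero
    · -- c > 0 : use `b = t⁻³ a t³ a⁻¹` and the point `(0, -3)`
      set b : H16 m := (tH m * tH m * tH m)⁻¹ * aH i0 * ((tH m * tH m * tH m)⁻¹)⁻¹ *
        (aH i0)⁻¹ with hbdef
      have hellp : ell μ ((0 : FreeAbelianGroup (Fin m)), (-3 : ℤ)) = -3 * μ (tH m) := by
        rw [ell_apply, map_zero, zero_add]
        norm_num
      have hp : ell μ ((0 : FreeAbelianGroup (Fin m)), (-3 : ℤ)) < -|μ (tH m)| := by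
        rw [hellp, abs_of_pos hcpos]
        linarith
      have hfb : (ψ b).f ((0 : FreeAbelianGroup (Fin m)), (-3 : ℤ)) = -1 := by
        rw [hbdef]
        simp only [map_mul, map_inv, ψ_tH]
        rw [commutator_f1 ((wT * wT * wT)⁻¹) (ψ (aH i0)) hψa_f, ψ_aH_q]
        rw [inv_f, inv_f, hW3q]
        rw [hW3f, hW3f]
        simp only [wT]
        rw [Prod.mk_sub_mk, Prod.mk_add_mk, Prod.mk_sub_mk, Prod.mk_sub_mk]
        norm_num [Prod.ext_iff, hofne, sub_eq_zero]
      exact main b _ (le_of_eq (hμb _).symm) hp (by rw [hfb]; norm_num)
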